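/- Let G be a finite directed graph with integer weights where every cycle has weight in {0} ∪ (-∞,-1] ∪ [1,∞) (viewed as integers: weight 0 or |weight| ≥ 1), all cycles in the same SCC having the same sign. Fix B = n² where n is the number of vertices. If there exists a cycle ρ and two closed walks following ρ in a product construction (pairs of vertices) with one of weight 0 and one of nonzero weight, then there exists such a cycle of length at most B. -/

import Mathlib

/-- A walk in a directed graph with adjacency `A`, given as a list of edges. -/
def IsWalk {V : Type*} (A : V → V → Prop) (l : List (V × V)) : Prop :=
  (∀ e ∈ l, A e.1 e.2) ∧ l.Chain' (fun e f => e.2 = f.1)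

/-- A cycle: a nonempty walk whose last edge ends where the first edge starts. -/
def IsCycle {V : Type*} (A : V → V → Prop) (l : List (V × V)) : Prop :=
  IsWalk A l ∧ l ≠ [] ∧ l.getLast?.map Prod.snd = l.head?.map Prod.fst

/-- The weight of a walk: the sum of its edge weights. -/
def walkWeight {V : Type*} (w : V → V → ℤ) (l : List (V × V)) : ℤ :=
  (l.map fun e => w e.1 e.2).sum

/-- Two vertices are in the same strongly connected component. -/
def SameSCC {V : Type*} (A : V → V → Prop) (u v : V) : Prop :=
  Relation.ReflTransGen A u v ∧ Relation.ReflTransGen A v u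

/-- The product graph on pairs of vertices: both components move along edges. -/
def prodAdj {V : Type*} (A : V → V → Prop) (p q : V × V) : Prop :=
  A p.1 q.1 ∧ A p.2 q.2

namespace Stmt12Aux

open List Relation

variable {α : Type*} {β : Type*} {A : α → α → Prop}

lemma walkWeight_append (w : α → α → ℤ) (a b : List (α × α)) :
    walkWeight w (a ++ b) = walkWeight w a + walkWeight w b := by
  simp [walkWeight]

/-- Mapping a cycle through a graph homomorphism. -/
lemma map_cycle {B : β → β → Prop} (g : α → β) (hg : ∀ a b, A a b → B (g a) (g b))
    {l : List (α × α)} (h : IsCycle A l) :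
    IsCycle B (l.map fun e => (g e.1, g e.2)) := by
  obtain ⟨⟨hedges, hchain⟩, hne, hclose⟩ := h
  refine ⟨⟨?_, ?_⟩, by simpa using hne, ?_⟩
  · intro e he
    obtain ⟨f, hf, rfl⟩ := List.mem_map.mp he
    exact hg _ _ (hedges f hf)
  · rw [List.Chain', List.isChain_map]
    exact hchain.imp fun a b hab => by simp [hab]
  · simp only [List.getLast?_map, List.head?_map, Option.map_map]
    have := congrArg (Option.map g) hclose
    simpa [Option.map_map, Function.comp_def] using this

lemma map_weight (w : β → β → ℤ) (g : α → β) (l : List (α × α)) :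
    walkWeight w (l.map fun e => (g e.1, g e.2)) = walkWeight (fun p q => w (g p) (g q)) l := by
  simp [walkWeight, List.map_map, Function.comp_def]

/-- From the head of a walk one reaches the source of every edge. -/
lemma reach_head : ∀ (l : List (α × α)), IsWalk A l → ∀ f e, l.head? = some f → e ∈ l →
    Relation.ReflTransGen A f.1 e.1 := by
  intro l
  induction l with
  | nil => intro _ f e _ he; simp at he
  | cons g t ih =>
    intro hw f e hf he
    simp only [List.head?_cons, Option.some.injEq] at hf
    subst hf
    rcases List.mem_cons.mp he with rfl | het
    · exact Relation.ReflTransGen.refl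
    · obtain ⟨h', t', rfl⟩ := List.exists_cons_of_ne_nil (List.ne_nil_of_mem het)
      have hstep : A g.1 g.2 := hw.1 g (by simp)
      have hcut : g.2 = h'.1 := (List.isChain_cons_cons.mp hw.2).1
      have hwt : IsWalk A (h' :: t') :=
        ⟨fun e' he' => hw.1 e' (by simp [he']), (List.isChain_cons_cons.mp hw.2).2⟩
      have := ih hwt h' e rfl het
      exact Relation.ReflTransGen.head hstep (hcut ▸ this)

/-- Every edge source in a walk reaches the target of the last edge. -/
lemma reach_last : ∀ (l : List (α × α)), IsWalk A l → ∀ g e, l.getLast? = some g → e ∈ l →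
    Relation.ReflTransGen A e.1 g.2 := by
  intro l
  induction l with
  | nil => intro _ g e _ he; simp at he
  | cons f t ih =>
    intro hw g e hg he
    rcases eq_or_ne t [] with rfl | htne
    · simp only [List.getLast?_singleton, Option.some.injEq] at hg
      subst hg
      rcases List.mem_singleton.mp he with rfl
      exact Relation.ReflTransGen.single (hw.1 e (by simp))
    · obtain ⟨h', t', rfl⟩ := List.exists_cons_of_ne_nil htne
      have hgt : (h' :: t').getLast? = some g := by
        rw [← hg]; exact (List.getLast?_cons_cons ..).symm
      have hwt : IsWalk A (h' :: t') :=
        ⟨fun e' he' => hw.1 e' (by simp [he']), (List.isChain_cons_cons.mp hw.2).2⟩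
      rcases List.mem_cons.mp he with rfl | het
      · have hstep : A e.1 e.2 := hw.1 e (by simp)
        have hcut : e.2 = h'.1 := (List.isChain_cons_cons.mp hw.2).1
        have := ih hwt g h' hgt (by simp)
        exact Relation.ReflTransGen.head hstep (hcut ▸ this)
      · exact ih hwt g e hgt het

/-- Any two edge sources on a cycle lie in the same SCC. -/
lemma cycle_scc {l : List (α × α)} (h : IsCycle A l) :
    ∀ x ∈ l.map Prod.fst, ∀ y ∈ l.map Prod.fst, SameSCC A x y := by
  obtain ⟨hw, hne, hclose⟩ := h
  obtain ⟨f, hf⟩ := Option.ne_none_iff_exists'.mp (fun hnone => hne (List.head?_eq_none_iff.mp hnone))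
  obtain ⟨g, hg⟩ := Option.ne_none_iff_exists'.mp
    (fun hnone => hne (List.getLast?_eq_none_iff.mp hnone))
  have hgf : g.2 = f.1 := by
    rw [hf, hg] at hclose
    simpa using hclose
  have key : ∀ x ∈ l.map Prod.fst, Relation.ReflTransGen A f.1 x ∧
      Relation.ReflTransGen A x f.1 := by
    intro x hx
    obtain ⟨e, he, rfl⟩ := List.mem_map.mp hx
    exact ⟨reach_head l hw f e hf he, hgf ▸ reach_last l hw g e hg he⟩
  intro x hx y hy
  exact ⟨(key x hx).2.trans (key y hy).1, (key y hy).2.trans (key x hx).1⟩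

/-- Splitting a cycle at a repeated vertex into two shorter cycles. -/
lemma split_cycle {L : List (α × α)} (h : IsCycle A L) (i j : ℕ) (hij : i < j)
    (hj : j < L.length) (heq : (L[i]'(lt_trans hij hj)).1 = (L[j]'hj).1) :
    ∃ M N : List (α × α), IsCycle A M ∧ IsCycle A N ∧
      M.length + N.length = L.length ∧ M ≠ [] ∧ N ≠ [] ∧
      (∀ e ∈ M, e ∈ L) ∧ (∀ e ∈ N, e ∈ L) ∧
      (∀ w : α → α → ℤ, walkWeight w L = walkWeight w M + walkWeight w N) := by
  obtain ⟨⟨hedges, hchain⟩, hne, hclose⟩ := h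
  have hch : ∀ k (hk : k + 1 < L.length), (L[k]'(by omega)).2 = (L[k+1]'hk).1 := by
    intro k hk
    exact List.isChain_iff_getElem.mp hchain k (by omega)
  have hch' : ∀ k (hk0 : 0 < k) (hk : k < L.length), (L[k-1]'(by omega)).2 = (L[k]'hk).1 := by
    intro k hk0 hk
    obtain ⟨k', rfl⟩ : ∃ m, k = m + 1 := ⟨k - 1, by omega⟩
    exact hch k' hk
  set M := (L.drop i).take (j - i) with hM
  set N := L.take i ++ L.drop j with hN
  have hMlen : M.length = j - i := by
    simp only [hM, List.length_take, List.length_drop]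
    omega
  have hNlen : N.length = i + (L.length - j) := by
    simp only [hN, List.length_append, List.length_take, List.length_drop]
    omega
  have hdecomp : L = L.take i ++ (M ++ L.drop j) := by
    rw [hM]
    have h1 : (L.drop i).drop (j - i) = L.drop j := by
      rw [List.drop_drop]
      congr 1
      omega
    rw [← h1, List.take_append_drop, List.take_append_drop]
  -- getElem facts
  have hMget : ∀ k (hk : k < M.length), M[k]'hk = L[i + k]'(by omega) := by
    intro k hk
    simp only [hM, List.getElem_take, List.getElem_drop]
  have hMne : M ≠ [] := by
    intro hnil
    rw [hnil] at hMlen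
    simp at hMlen
    omega
  have hdropne : L.drop j ≠ [] := by
    intro hnil
    have := congrArg List.length hnil
    simp at this
    omega
  have hNne : N ≠ [] := by
    simp [hN, hdropne]
  -- M is a cycle
  have hMinfix : M <:+: L := ⟨L.take i, L.drop j, by rw [List.append_assoc]; exact hdecomp.symm⟩
  have hMsub : ∀ e ∈ M, e ∈ L := fun e he => hMinfix.subset he
  have hMcycle : IsCycle A M := by
    refine ⟨⟨fun e he => hedges e (hMsub e he), hchain.infix hMinfix⟩, hMne, ?_⟩
    have hhead : M.head? = some (L[i]'(by omega)) := by
      rw [List.head?_eq_getElem?, List.getElem?_eq_getElem (by omega)]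
      congr 1
      simpa using hMget 0 (by omega)
    have hlast : M.getLast? = some (L[j-1]'(by omega)) := by
      rw [List.getLast?_eq_getElem?, List.getElem?_eq_getElem (by rw [hMlen]; omega)]
      congr 1
      rw [hMget (M.length - 1) (by omega)]
      congr 1
      omega
    rw [hhead, hlast]
    simp only [Option.map_some]
    congr 1
    exact (hch' j (by omega) hj).trans heq.symm
  -- N is a cycle
  have hNsub : ∀ e ∈ N, e ∈ L := by
    intro e he
    rcases List.mem_append.mp he with h' | h'
    · exact List.mem_of_mem_take h'
    · exact List.mem_of_mem_drop h'
  have htake_last : 0 < i → (L.take i).getLast? = some (L[i-1]'(by omega)) := by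
    intro hi
    rw [List.getLast?_eq_getElem?, List.getElem?_eq_getElem
      (by simp [List.length_take]; omega)]
    congr 1
    rw [List.getElem_take]
    congr 1
    simp [List.length_take]
    omega
  have hdrop_head : (L.drop j).head? = some (L[j]'hj) := by
    rw [List.head?_eq_getElem?, List.getElem?_eq_getElem (by simp [List.length_drop]; omega)]
    congr 1
    simp [List.getElem_drop]
  have hNcycle : IsCycle A N := by
    refine ⟨⟨fun e he => hedges e (hNsub e he), ?_⟩, hNne, ?_⟩
    · rw [hN, List.Chain', List.isChain_append]
      refine ⟨hchain.prefix (List.take_prefix _ _), hchain.suffix (List.drop_suffix _ _), ?_⟩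
      intro x hx y hy
      rcases Nat.eq_zero_or_pos i with rfl | hi
      · simp at hx
      · rw [htake_last hi] at hx
        rw [hdrop_head] at hy
        simp only [Option.mem_def, Option.some.injEq] at hx hy
        subst hx; subst hy
        exact (hch' i hi (by omega)).trans heq
    · have hNlast : N.getLast? = L.getLast? := by
        rw [hN, List.getLast?_append]
        rcases Option.ne_none_iff_exists'.mp
          (fun hnone => hdropne (List.getLast?_eq_none_iff.mp hnone)) with ⟨g, hg⟩
        rw [hg, Option.some_or]
        conv_rhs => rw [hdecomp]
        rw [List.getLast?_append, List.getLast?_append, hg, Option.some_or, Option.some_or]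
      rw [hNlast, hclose]
      -- L.head?.map fst = N.head?.map fst
      rcases Nat.eq_zero_or_pos i with rfl | hi
      · have hNhead : N.head? = some (L[j]'hj) := by
          rw [hN]; simpa using hdrop_head
        rw [List.head?_eq_getElem?, List.getElem?_eq_getElem (show 0 < L.length by omega),
          hNhead]
        simpa using heq
      · have htne : L.take i ≠ [] := by
          intro hnil
          have := congrArg List.length hnil
          simp only [List.length_take, List.length_nil] at this
          omega
        obtain ⟨f, hf⟩ := Option.ne_none_iff_exists'.mp
          (fun hnone => htne (List.head?_eq_none_iff.mp hnone))
        have hNhead : N.head? = L.head? := by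
          conv_rhs => rw [← List.take_append_drop i L]
          rw [hN, List.head?_append, List.head?_append, hf, Option.some_or, Option.some_or]
        rw [hNhead]
  refine ⟨M, N, hMcycle, hNcycle, by omega, hMne, hNne, hMsub, hNsub, ?_⟩
  intro w
  conv_lhs => rw [hdecomp]
  rw [walkWeight_append, walkWeight_append, hN, walkWeight_append]
  ring

end Stmt12Aux

/-- In a finite graph whose cycles have weight 0 or absolute weight ≥ 1, same sign
within each SCC: if in the product graph (pairs of vertices) some cycle has one
traversal of weight 0 and one of nonzero weight, then such a cycle of length at
most `B = n²` exists. -/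
theorem stmt12 {V : Type*} [Fintype V] (A : V → V → Prop) (w : V → V → ℤ)
    (hsimple01 : ∀ l, IsCycle A l → walkWeight w l = 0 ∨ 1 ≤ |walkWeight w l|)
    (hscc : ∀ v : V,
      (∀ l, IsCycle A l → (∀ x ∈ l.map Prod.fst, SameSCC A v x) → 0 ≤ walkWeight w l) ∨
      (∀ l, IsCycle A l → (∀ x ∈ l.map Prod.fst, SameSCC A v x) → walkWeight w l ≤ 0))
    (hex : ∃ L : List ((V × V) × (V × V)), IsCycle (prodAdj A) L ∧
      walkWeight (fun p q => w p.1 q.1) L = 0 ∧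
      walkWeight (fun p q => w p.2 q.2) L ≠ 0) :
    ∃ L : List ((V × V) × (V × V)), IsCycle (prodAdj A) L ∧
      walkWeight (fun p q => w p.1 q.1) L = 0 ∧
      walkWeight (fun p q => w p.2 q.2) L ≠ 0 ∧
      L.length ≤ (Fintype.card V) ^ 2 := by
  classical
  obtain ⟨L0, hL0, h10, h20⟩ := hex
  suffices H : ∀ n (L : List ((V × V) × (V × V))), L.length = n →
      IsCycle (prodAdj A) L → walkWeight (fun p q => w p.1 q.1) L = 0 →
      walkWeight (fun p q => w p.2 q.2) L ≠ 0 →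
      ∃ L' : List ((V × V) × (V × V)), IsCycle (prodAdj A) L' ∧
        walkWeight (fun p q => w p.1 q.1) L' = 0 ∧
        walkWeight (fun p q => w p.2 q.2) L' ≠ 0 ∧
        L'.length ≤ (Fintype.card V) ^ 2 by
    exact H L0.length L0 rfl hL0 h10 h20
  intro n
  induction n using Nat.strong_induction_on with
  | _ n ih =>
    intro L hlen hL h1 h2
    by_cases hle : L.length ≤ (Fintype.card V) ^ 2
    · exact ⟨L, hL, h1, h2, hle⟩
    · push_neg at hle
      -- pigeonhole: repeated source vertex pair
      have hnotnodup : ¬ (L.map Prod.fst).Nodup := by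
        intro hnd
        have := hnd.length_le_card
        rw [List.length_map] at this
        have hcard : Fintype.card (V × V) = Fintype.card V ^ 2 := by
          rw [Fintype.card_prod, sq]
        omega
      rw [List.nodup_iff_injective_get] at hnotnodup
      rw [Function.not_injective_iff] at hnotnodup
      obtain ⟨a, b, hab, hne⟩ := hnotnodup
      -- wlog a < b
      have hmaplen : (L.map Prod.fst).length = L.length := List.length_map _
      obtain ⟨i, j, hilt, hjlt, hij, heq⟩ : ∃ i j, ∃ (hi : i < L.length) (hj : j < L.length),
          i < j ∧ (L[i]'hi).1 = (L[j]'hj).1 := by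
        rcases lt_or_gt_of_ne (fun h => hne (Fin.ext h)) with h' | h'
        · exact ⟨a, b, by omega, by omega, h', by
            have := hab
            simp only [List.get_eq_getElem, List.getElem_map] at this
            exact this⟩
        · exact ⟨b, a, by omega, by omega, h', by
            have := hab.symm
            simp only [List.get_eq_getElem, List.getElem_map] at this
            exact this⟩
      obtain ⟨M, N, hMc, hNc, hlensum, hMne, hNne, hMsub, hNsub, hwsum⟩ :=
        Stmt12Aux.split_cycle hL i j hij hjlt heq
      -- projections
      have hproj1 : ∀ (l : List ((V × V) × (V × V))), IsCycle (prodAdj A) l →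
          IsCycle A (l.map fun e => (e.1.1, e.2.1)) := by
        intro l hl
        exact Stmt12Aux.map_cycle (Prod.fst : V × V → V) (fun a b hab => hab.1) hl
      -- SCC: choose base vertex
      have hLproj : IsCycle A (L.map fun e => (e.1.1, e.2.1)) := hproj1 L hL
      obtain ⟨e0, he0⟩ := List.exists_mem_of_ne_nil L hL.2.1
      set v : V := e0.1.1 with hv
      have hvmem : v ∈ (L.map fun e => (e.1.1, e.2.1)).map Prod.fst := by
        simp only [List.map_map, List.mem_map]
        exact ⟨e0, he0, rfl⟩
      have hsccmem : ∀ (l : List ((V × V) × (V × V))), (∀ e ∈ l, e ∈ L) →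
          ∀ x ∈ ((l.map fun e => (e.1.1, e.2.1)).map Prod.fst), SameSCC A v x := by
        intro l hsub x hx
        refine Stmt12Aux.cycle_scc hLproj v hvmem x ?_
        simp only [List.map_map, List.mem_map] at hx ⊢
        obtain ⟨e, he, rfl⟩ := hx
        exact ⟨e, hsub e he, rfl⟩
      -- weights of projections
      have hw1 : ∀ (l : List ((V × V) × (V × V))),
          walkWeight w (l.map fun e => (e.1.1, e.2.1)) =
            walkWeight (fun p q => w p.1 q.1) l := by
        intro l
        exact Stmt12Aux.map_weight w (Prod.fst : V × V → V) l
      have hMN1 : walkWeight (fun p q => w p.1 q.1) M +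
          walkWeight (fun p q => w p.1 q.1) N = 0 := by
        rw [← hwsum (fun p q => w p.1 q.1)] at *
        exact h1
      have hMN2 : walkWeight (fun p q => w p.2 q.2) M +
          walkWeight (fun p q => w p.2 q.2) N ≠ 0 := by
        rw [← hwsum (fun p q => w p.2 q.2)]
        exact h2
      -- both first-component weights are zero, using sign coherence
      have hM0 : walkWeight (fun p q => w p.1 q.1) M = 0 ∧
          walkWeight (fun p q => w p.1 q.1) N = 0 := by
        have hMproj := hproj1 M hMc
        have hNproj := hproj1 N hNc
        have hMscc := hsccmem M hMsub
        have hNscc := hsccmem N hNsub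
        rcases hscc v with hpos | hneg
        · have h1M := hpos _ hMproj hMscc
          have h1N := hpos _ hNproj hNscc
          rw [hw1 M] at h1M
          rw [hw1 N] at h1N
          constructor <;> omega
        · have h1M := hneg _ hMproj hMscc
          have h1N := hneg _ hNproj hNscc
          rw [hw1 M] at h1M
          rw [hw1 N] at h1N
          constructor <;> omega
      -- pick the piece with nonzero second weight
      have hMlt : M.length < n := by
        have : 0 < N.length := List.length_pos_iff.mpr hNne
        omega
      have hNlt : N.length < n := by
        have : 0 < M.length := List.length_pos_iff.mpr hMne
        omega
      by_cases hM2 : walkWeight (fun p q => w p.2 q.2) M = 0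
      · have hN2 : walkWeight (fun p q => w p.2 q.2) N ≠ 0 := by
          intro h'; exact hMN2 (by omega)
        exact ih N.length hNlt N rfl hNc hM0.2 hN2
      · exact ih M.length hMlt M rfl hMc hM0.1 hM2
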